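/- There exists an extended finite automaton A over the group ℤ × ℤ₂ such that L(A) is not regular and gmc_A(n) ∈ O(√n). -/

import Mathlib

open scoped Classical

/-- An extended finite automaton (EFA) over a group `M`, with input alphabet `V`:
a finite automaton whose transitions additionally multiply a group register by elements
of `M`. -/
structure EFA (V M : Type) [Group M] where
  /-- States. -/
  Q : Type
  [fQ : Fintype Q]
  /-- Transition function: finitely many (state, group element) pairs per state and letter. -/
  δ : Q → V → Set (Q × M)
  fin : ∀ q a, (δ q a).Finite
  /-- Initial state. -/
  q₀ : Q
  /-- Final states. -/
  F : Set Q

variable {V M : Type} [Group M]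

/-- `A.Steps c c' k` : the EFA `A` goes from configuration `c` (state, remaining input,
register) to configuration `c'` using exactly `k` transitions whose group element is not the
identity. -/
inductive EFA.Steps (A : EFA V M) :
    A.Q × List V × M → A.Q × List V × M → ℕ → Prop
  | refl (c : A.Q × List V × M) : Steps A c c 0
  | step {s : A.Q} {r : M} {q : A.Q} {w : List V} {m : M} {c : A.Q × List V × M} {k : ℕ}
      {a : V} (h : (s, r) ∈ A.δ q a) (ih : Steps A (s, w, m * r) c k) :
      Steps A (q, a :: w, m) c (if r = 1 then k else k + 1)

/-- The word `w` is accepted using exactly `k` non-identity group elements: starting from the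
initial state with register `1`, the whole input is read and a final state is reached with
register `1`. -/
def EFA.AcceptsN (A : EFA V M) (w : List V) (k : ℕ) : Prop :=
  ∃ q ∈ A.F, A.Steps (A.q₀, w, 1) (q, [], 1) k

/-- The language accepted by an EFA. -/
def EFA.language (A : EFA V M) : Language V := {w | ∃ k, A.AcceptsN w k}

/-- Group memory complexity of a word: the minimal number of non-identity group elements used
over all accepting computations (`0` if the word is not accepted). -/
noncomputable def EFA.gmcW (A : EFA V M) (w : List V) : ℕ :=
  sInf {k | A.AcceptsN w k}

/-- Group memory complexity of the EFA: maximum over words of length `n`. -/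
noncomputable def EFA.gmcFun (A : EFA V M) (n : ℕ) : ℕ :=
  sSup {m | ∃ w : List V, w.length = n ∧ A.gmcW w = m}

/-- `f ∈ O(h)` for `ℕ`-valued functions. -/
def InO (f h : ℕ → ℕ) : Prop := ∃ c : ℕ, ∀ n, f n ≤ c * h n + c

/-- `f ∈ Ω(n)`: there is a rational constant `1/c > 0` with `f n ≥ n/c` for infinitely many `n`. -/
def InOmegaLinear (f : ℕ → ℕ) : Prop := ∃ c : ℕ, 0 < c ∧ ∀ m : ℕ, ∃ n ≥ m, n ≤ c * f n

namespace EfaSqrt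

inductive Sym : Type
  | a | b
deriving DecidableEq

instance : Fintype Sym :=
  ⟨{Sym.a, Sym.b}, by intro x; cases x <;> simp⟩

inductive St : Type
  | S | B | P1 | P2
deriving DecidableEq

instance : Fintype St :=
  ⟨{St.S, St.B, St.P1, St.P2}, by intro x; cases x <;> simp⟩

abbrev G : Type := Multiplicative ℤ × Multiplicative (ZMod 2)

def ι (d : ℤ) : G := (Multiplicative.ofAdd d, 1)

lemma ι_mul (d e : ℤ) : ι d * ι e = ι (d + e) := by
  simp [ι, Prod.ext_iff, ← ofAdd_add]

lemma ι_zero : ι 0 = 1 := by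
  simp [ι, Prod.ext_iff]

lemma ι_eq_one {d : ℤ} : ι d = 1 ↔ d = 0 := by
  constructor
  · intro h
    have := congrArg Prod.fst h
    simpa [ι] using this
  · rintro rfl; exact ι_zero

lemma ι_inv (d : ℤ) : (ι d)⁻¹ = ι (-d) := by
  apply inv_eq_of_mul_eq_one_right
  rw [ι_mul]; simp [ι_zero]

lemma ι_inj {d e : ℤ} (h : ι d = ι e) : d = e := by
  have := congrArg Prod.fst h
  simpa [ι] using this

lemma mul_ι_eq {m : G} {d X : ℤ} (h : m * ι d = ι X) : m = ι (X - d) := by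
  have h2 : m = ι X * (ι d)⁻¹ := eq_mul_inv_of_mul_eq h
  rw [h2, ι_inv, ι_mul, ← sub_eq_add_neg]

/-- The transition function. -/
def dlt : St → Sym → Set (St × G)
  | .S, .a => {(.S, 1)}
  | .S, .b => {(.S, ι 1), (.S, 1), (.B, ι 1), (.B, 1), (.P1, ι 1), (.P1, 1)}
  | .B, .a => {(.B, ι (-1))}
  | .B, .b => ∅
  | .P1, .a => {(.P1, ι (-1))}
  | .P1, .b => {(.P2, 1)}
  | .P2, .a => {(.P2, 1)}
  | .P2, .b => {(.P2, ι 1), (.P2, 1)}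

/-- The EFA. -/
@[reducible] def A : EFA Sym G where
  Q := St
  δ := dlt
  fin := by
    intro q x
    cases q <;> cases x <;>
      simp only [dlt] <;>
      first
        | exact Set.finite_empty
        | exact (Set.finite_singleton _).insert _ |>.insert _ |>.insert _ |>.insert _ |>.insert _
        | exact (Set.finite_singleton _).insert _
        | exact Set.finite_singleton _
  q₀ := .S
  F := {.B, .P2}

/-! ### Word notation -/

def rep (n : ℕ) : List Sym := List.replicate n Sym.a

def cb (w : List Sym) : ℕ := w.count Sym.b

@[simp] lemma rep_zero : rep 0 = [] := rfl

@[simp] lemma rep_succ (n : ℕ) : rep (n + 1) = Sym.a :: rep n := rfl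

@[simp] lemma length_rep (n : ℕ) : (rep n).length = n := by simp [rep]

@[simp] lemma cb_nil : cb [] = 0 := rfl

@[simp] lemma cb_cons_a (w : List Sym) : cb (Sym.a :: w) = cb w := by
  simp [cb, List.count_cons]

@[simp] lemma cb_cons_b (w : List Sym) : cb (Sym.b :: w) = cb w + 1 := by
  simp [cb, List.count_cons]

@[simp] lemma cb_append (u v : List Sym) : cb (u ++ v) = cb u + cb v := by
  simp [cb]

@[simp] lemma cb_rep (n : ℕ) : cb (rep n) = 0 := by
  simp [cb, rep, List.count_replicate]

/-! ### Step helpers -/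

lemma stepI {s q : St} {x : Sym} {w : List Sym} {m : G} {c : St × List Sym × G} {k : ℕ}
    (h : (s, (1 : G)) ∈ dlt q x) (h2 : A.Steps (s, w, m) c k) :
    A.Steps (q, x :: w, m) c k := by
  have h2' : A.Steps (s, w, m * 1) c k := by rwa [mul_one]
  have := EFA.Steps.step (A := A) (h := h) h2'
  simpa using this

lemma stepN {d : ℤ} (hd : d ≠ 0) {s q : St} {x : Sym} {w : List Sym} {m : G}
    {c : St × List Sym × G} {k : ℕ}
    (h : (s, ι d) ∈ dlt q x) (h2 : A.Steps (s, w, m * ι d) c k) :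
    A.Steps (q, x :: w, m) c (k + 1) := by
  have := EFA.Steps.step (A := A) (h := h) h2
  rwa [if_neg (by simpa [ι_eq_one] using hd)] at this

lemma stepC {d : ℕ} (hd : d ≤ 1) {s q : St} {x : Sym} {w : List Sym} {m : G}
    {c : St × List Sym × G} {k : ℕ}
    (h : (s, ι d) ∈ dlt q x) (h2 : A.Steps (s, w, m * ι d) c k) :
    A.Steps (q, x :: w, m) c (k + d) := by
  interval_cases d
  · have h' : (s, (1 : G)) ∈ dlt q x := by rwa [show ((0:ℕ):ℤ) = 0 by simp, ι_zero] at h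
    have h2' : A.Steps (s, w, m) c k := by
      rwa [show ((0:ℕ):ℤ) = 0 by simp, ι_zero, mul_one] at h2
    exact stepI h' h2'
  · have e : ((1:ℕ):ℤ) = 1 := by norm_num
    rw [e] at h h2
    exact stepN one_ne_zero h h2

lemma steps_trans {c1 c2 c3 : St × List Sym × G} {k k' : ℕ}
    (h1 : A.Steps c1 c2 k) (h2 : A.Steps c2 c3 k') : A.Steps c1 c3 (k + k') := by
  obtain ⟨c1', rfl⟩ : ∃ c1' : A.Q × List Sym × G, c1' = c1 := ⟨c1, rfl⟩
  obtain ⟨c2', rfl⟩ : ∃ c2' : A.Q × List Sym × G, c2' = c2 := ⟨c2, rfl⟩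
  induction h1 with
  | refl c => simpa using h2
  | step h hrest ih =>
      have := EFA.Steps.step (A := A) (h := h) (ih h2)
      split at this <;> split <;> first
        | exact this
        | (rename_i h1 h2; exact absurd h1 h2)
        | (rename_i h1 h2; exact absurd h2 h1)
        | (rw [Nat.add_right_comm]; exact this)

/-! ### Run construction -/

lemma run_S_count : ∀ (u : List Sym) (t : ℕ), t ≤ cb u →
    ∀ (w : List Sym) (m : G), A.Steps (St.S, u ++ w, m) (St.S, w, m * ι t) t := by
  intro u
  induction u with
  | nil =>
      intro t ht w m
      obtain rfl : t = 0 := by simpa using ht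
      have : m * ι ((0:ℕ):ℤ) = m := by simp [ι_zero]
      rw [this]
      exact EFA.Steps.refl _
  | cons x u' ih =>
      intro t ht w m
      cases x with
      | a =>
          refine stepI (s := St.S) (q := St.S) (x := Sym.a) (by simp [dlt]) ?_
          exact ih t (by simpa using ht) w m
      | b =>
          cases t with
          | zero =>
              refine stepI (s := St.S) (q := St.S) (x := Sym.b) (by simp [dlt]) ?_
              exact ih 0 (by simp) w m
          | succ t' =>
              have ht' : t' ≤ cb u' := by simp at ht; omega
              have h1 := ih t' ht' w (m * ι 1)
              have h2 := stepN (s := St.S) (q := St.S) (x := Sym.b) one_ne_zero (by simp [dlt]) h1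
              have e : m * ι 1 * ι t' = m * ι ((t' + 1 : ℕ) : ℤ) := by
                rw [mul_assoc, ι_mul]
                congr 1
                push_cast
                ring
              rw [e] at h2
              exact h2

lemma run_S_skip (n : ℕ) (w : List Sym) (m : G) :
    A.Steps (St.S, rep n ++ w, m) (St.S, w, m) 0 := by
  have := run_S_count (rep n) 0 (by simp) w m
  simpa [ι_zero] using this

lemma run_B (g : ℕ) (m : G) :
    A.Steps (St.B, rep g, m) (St.B, [], m * ι (-(g:ℤ))) g := by
  induction g generalizing m with
  | zero =>
      have : m * ι (-((0:ℕ):ℤ)) = m := by simp [ι_zero]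
      rw [this]; exact EFA.Steps.refl _
  | succ g' ih =>
      have h1 := ih (m * ι (-1))
      have e : m * ι (-1) * ι (-(g':ℤ)) = m * ι (-((g' + 1 : ℕ) : ℤ)) := by
        rw [mul_assoc, ι_mul]; congr 1; push_cast; ring
      rw [e] at h1
      exact stepN (s := St.B) (q := St.B) (x := Sym.a) (by norm_num) (by simp [dlt]) h1

lemma run_P1a (g : ℕ) (w : List Sym) (m : G) :
    A.Steps (St.P1, rep g ++ w, m) (St.P1, w, m * ι (-(g:ℤ))) g := by
  induction g generalizing m with
  | zero =>
      have : m * ι (-((0:ℕ):ℤ)) = m := by simp [ι_zero]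
      rw [this]; exact EFA.Steps.refl _
  | succ g' ih =>
      have h1 := ih (m * ι (-1))
      have e : m * ι (-1) * ι (-(g':ℤ)) = m * ι (-((g' + 1 : ℕ) : ℤ)) := by
        rw [mul_assoc, ι_mul]; congr 1; push_cast; ring
      rw [e] at h1
      exact stepN (s := St.P1) (q := St.P1) (x := Sym.a) (by norm_num) (by simp [dlt]) h1

lemma run_P2 : ∀ (v : List Sym) (t : ℕ), t ≤ cb v →
    ∀ (m : G), A.Steps (St.P2, v, m) (St.P2, [], m * ι t) t := by
  intro v
  induction v with
  | nil =>
      intro t ht m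
      obtain rfl : t = 0 := by simpa using ht
      have : m * ι ((0:ℕ):ℤ) = m := by simp [ι_zero]
      rw [this]; exact EFA.Steps.refl _
  | cons x v' ih =>
      intro t ht m
      cases x with
      | a =>
          refine stepI (s := St.P2) (q := St.P2) (x := Sym.a) (by simp [dlt]) ?_
          exact ih t (by simpa using ht) m
      | b =>
          cases t with
          | zero =>
              refine stepI (s := St.P2) (q := St.P2) (x := Sym.b) (by simp [dlt]) ?_
              exact ih 0 (by simp) m
          | succ t' =>
              have ht' : t' ≤ cb v' := by simp at ht; omega
              have h1 := ih t' ht' (m * ι 1)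
              have h2 := stepN (s := St.P2) (q := St.P2) (x := Sym.b) one_ne_zero (by simp [dlt]) h1
              have e : m * ι 1 * ι t' = m * ι ((t' + 1 : ℕ) : ℤ) := by
                rw [mul_assoc, ι_mul]; congr 1; push_cast; ring
              rw [e] at h2
              exact h2

/-! ### Cheap accepting runs -/

lemma memF_B : St.B ∈ A.F := by simp [A]

lemma memF_P2 : St.P2 ∈ A.F := by simp [A]

lemma cheap1 (u : List Sym) (g : ℕ) (hg : g ≤ cb u + 1) :
    ∃ k, A.AcceptsN (u ++ Sym.b :: rep g) k ∧ k ≤ 2 * g := by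
  set t₁ := min g (cb u) with ht₁def
  set d := g - t₁ with hddef
  have ht₁ : t₁ ≤ cb u := min_le_right _ _
  have hd1 : d ≤ 1 := by omega
  have hsum : t₁ + d = g := by omega
  have hmem : (St.B, ι d) ∈ dlt St.S Sym.b := by
    interval_cases d
    · have : ι ((0:ℕ):ℤ) = 1 := by rw [show ((0:ℕ):ℤ) = 0 by norm_num, ι_zero]
      rw [this]; simp [dlt]
    · rw [show ((1:ℕ):ℤ) = 1 by norm_num]; simp [dlt]
  have r1 := run_S_count u t₁ ht₁ (Sym.b :: rep g) 1
  have r3 := run_B g ((1 : G) * ι t₁ * ι d)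
  have hreg : (1 : G) * ι t₁ * ι d * ι (-(g:ℤ)) = 1 := by
    rw [one_mul, ι_mul, ι_mul, ι_eq_one]
    omega
  rw [hreg] at r3
  have r2 := stepC hd1 hmem r3
  have rtot := steps_trans r1 r2
  exact ⟨t₁ + (g + d), ⟨St.B, memF_B, rtot⟩, by omega⟩

lemma cheap2 (u : List Sym) (g : ℕ) (v : List Sym) (hg : g ≤ cb u + cb v + 1) :
    ∃ k, A.AcceptsN (u ++ Sym.b :: (rep g ++ Sym.b :: v)) k ∧ k ≤ 2 * g := by
  set t₁ := min g (cb u) with ht₁def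
  set d := min (g - t₁) 1 with hddef
  set t₂ := g - t₁ - d with ht₂def
  have ht₁ : t₁ ≤ cb u := min_le_right _ _
  have hd1 : d ≤ 1 := min_le_right _ _
  have ht₂ : t₂ ≤ cb v := by omega
  have hsum : t₁ + d + t₂ = g := by omega
  have hmem : (St.P1, ι d) ∈ dlt St.S Sym.b := by
    interval_cases d
    · have : ι ((0:ℕ):ℤ) = 1 := by rw [show ((0:ℕ):ℤ) = 0 by norm_num, ι_zero]
      rw [this]; simp [dlt]
    · rw [show ((1:ℕ):ℤ) = 1 by norm_num]; simp [dlt]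
  have r1 := run_S_count u t₁ ht₁ (Sym.b :: (rep g ++ Sym.b :: v)) 1
  have r3 := run_P1a g (Sym.b :: v) ((1 : G) * ι t₁ * ι d)
  have r5 := run_P2 v t₂ ht₂ ((1 : G) * ι t₁ * ι d * ι (-(g:ℤ)))
  have hreg : (1 : G) * ι t₁ * ι d * ι (-(g:ℤ)) * ι t₂ = 1 := by
    rw [one_mul, ι_mul, ι_mul, ι_mul, ι_eq_one]
    omega
  rw [hreg] at r5
  have r4 : A.Steps (St.P1, Sym.b :: v, (1 : G) * ι t₁ * ι d * ι (-(g:ℤ)))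
      (St.P2, [], 1) t₂ := stepI (by simp [dlt]) r5
  have r34 := steps_trans r3 r4
  have r234 := stepC hd1 hmem r34
  have rtot := steps_trans r1 r234
  exact ⟨t₁ + (g + t₂ + d), ⟨St.P2, memF_P2, rtot⟩, by omega⟩

/-! ### Soundness -/

def D1 (w : List Sym) (m : G) : Prop :=
  ∃ u g t, w = u ++ Sym.b :: rep g ∧ t ≤ cb u + 1 ∧ m = ι ((g:ℤ) - (t:ℤ))

def D2 (w : List Sym) (m : G) : Prop :=
  ∃ u g v t, w = u ++ Sym.b :: (rep g ++ Sym.b :: v) ∧ t ≤ cb u + cb v + 1 ∧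
    m = ι ((g:ℤ) - (t:ℤ))

def Inv : St → List Sym → G → Prop
  | .S, w, m => D1 w m ∨ D2 w m
  | .B, w, m => ∃ g : ℕ, w = rep g ∧ m = ι (g:ℤ)
  | .P1, w, m => ∃ g v t, w = rep g ++ Sym.b :: v ∧ t ≤ cb v ∧ m = ι ((g:ℤ) - (t:ℤ))
  | .P2, w, m => ∃ t : ℕ, t ≤ cb w ∧ m = ι (-(t:ℤ))

lemma soundness_aux {c cend : St × List Sym × G} {k : ℕ} (h : A.Steps c cend k) :
    cend.1 ∈ A.F → cend.2.1 = [] → cend.2.2 = 1 → Inv c.1 c.2.1 c.2.2 := by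
  obtain ⟨c', rfl⟩ : ∃ c' : A.Q × List Sym × G, c' = c := ⟨c, rfl⟩
  obtain ⟨cend', rfl⟩ : ∃ cend' : A.Q × List Sym × G, cend' = cend := ⟨cend, rfl⟩
  induction h with
  | refl c =>
      obtain ⟨st, w, m⟩ := c
      intro hF hw hm
      simp only at hF hw hm
      subst hw hm
      have : st = St.B ∨ st = St.P2 := by simpa [A] using hF
      rcases this with rfl | rfl
      · exact ⟨0, rfl, by rw [show ((0:ℕ):ℤ) = 0 by norm_num, ι_zero]⟩
      · exact ⟨0, by simp, by rw [show (-((0:ℕ):ℤ)) = 0 by norm_num, ι_zero]⟩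
  | @step s r q w m c k x hmem hrest ih =>
      intro hF hw hm
      have ih' := ih hF hw hm
      simp only at ih' ⊢
      have hm2 : (s, r) ∈ dlt q x := hmem
      clear hmem hrest
      cases q <;> cases x <;>
        simp only [dlt, Set.mem_insert_iff, Set.mem_singleton_iff, Set.mem_empty_iff_false,
          Prod.mk.injEq] at hm2
      -- S, a
      · obtain ⟨rfl, rfl⟩ := hm2
        rw [mul_one] at ih'
        rcases ih' with h1 | h2
        · obtain ⟨u, g, t, rfl, ht, hmr⟩ := h1
          exact Or.inl ⟨Sym.a :: u, g, t, rfl, by simpa using ht, hmr⟩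
        · obtain ⟨u, g, v, t, rfl, ht, hmr⟩ := h2
          exact Or.inr ⟨Sym.a :: u, g, v, t, rfl, by simpa using ht, hmr⟩
      -- S, b
      · rcases hm2 with ⟨rfl, rfl⟩ | ⟨rfl, rfl⟩ | ⟨rfl, rfl⟩ | ⟨rfl, rfl⟩ | ⟨rfl, rfl⟩ | ⟨rfl, rfl⟩
        · -- (S, ι 1)
          rcases ih' with h1 | h2
          · obtain ⟨u, g, t, rfl, ht, hmr⟩ := h1
            refine Or.inl ⟨Sym.b :: u, g, t + 1, rfl, by simp; omega, ?_⟩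
            rw [mul_ι_eq hmr]
            all_goals exact congrArg ι (by push_cast; ring)
          · obtain ⟨u, g, v, t, rfl, ht, hmr⟩ := h2
            refine Or.inr ⟨Sym.b :: u, g, v, t + 1, rfl, by simp; omega, ?_⟩
            rw [mul_ι_eq hmr]
            all_goals exact congrArg ι (by push_cast; ring)
        · -- (S, 1)
          rw [mul_one] at ih'
          rcases ih' with h1 | h2
          · obtain ⟨u, g, t, rfl, ht, hmr⟩ := h1
            exact Or.inl ⟨Sym.b :: u, g, t, rfl, by simp; omega, hmr⟩
          · obtain ⟨u, g, v, t, rfl, ht, hmr⟩ := h2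
            exact Or.inr ⟨Sym.b :: u, g, v, t, rfl, by simp; omega, hmr⟩
        · -- (B, ι 1)
          obtain ⟨g, rfl, hmr⟩ := ih'
          refine Or.inl ⟨[], g, 1, rfl, by simp, ?_⟩
          rw [mul_ι_eq hmr]
          all_goals exact congrArg ι (by push_cast; ring)
        · -- (B, 1)
          rw [mul_one] at ih'
          obtain ⟨g, rfl, hmr⟩ := ih'
          refine Or.inl ⟨[], g, 0, rfl, by simp, ?_⟩
          rw [hmr]
          all_goals exact congrArg ι (by push_cast; ring)
        · -- (P1, ι 1)
          obtain ⟨g, v, t, rfl, ht, hmr⟩ := ih'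
          refine Or.inr ⟨[], g, v, t + 1, rfl, by simp; omega, ?_⟩
          rw [mul_ι_eq hmr]
          all_goals exact congrArg ι (by push_cast; ring)
        · -- (P1, 1)
          rw [mul_one] at ih'
          obtain ⟨g, v, t, rfl, ht, hmr⟩ := ih'
          exact Or.inr ⟨[], g, v, t, rfl, by simp; omega, hmr⟩
      -- B, a
      · obtain ⟨rfl, rfl⟩ := hm2
        obtain ⟨g, rfl, hmr⟩ := ih'
        refine ⟨g + 1, rfl, ?_⟩
        rw [mul_ι_eq hmr]
        all_goals exact congrArg ι (by push_cast; ring)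
      -- P1, a
      · obtain ⟨rfl, rfl⟩ := hm2
        obtain ⟨g, v, t, rfl, ht, hmr⟩ := ih'
        refine ⟨g + 1, v, t, rfl, ht, ?_⟩
        rw [mul_ι_eq hmr]
        all_goals exact congrArg ι (by push_cast; ring)
      -- P1, b
      · obtain ⟨rfl, rfl⟩ := hm2
        rw [mul_one] at ih'
        obtain ⟨t, ht, hmr⟩ := ih'
        refine ⟨0, w, t, rfl, ht, ?_⟩
        rw [hmr]
        all_goals exact congrArg ι (by push_cast; ring)
      -- P2, a
      · obtain ⟨rfl, rfl⟩ := hm2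
        rw [mul_one] at ih'
        obtain ⟨t, ht, hmr⟩ := ih'
        exact ⟨t, by simpa using ht, hmr⟩
      -- P2, b
      · rcases hm2 with ⟨rfl, rfl⟩ | ⟨rfl, rfl⟩
        · obtain ⟨t, ht, hmr⟩ := ih'
          refine ⟨t + 1, by simp; omega, ?_⟩
          rw [mul_ι_eq hmr]
          all_goals exact congrArg ι (by push_cast; ring)
        · rw [mul_one] at ih'
          obtain ⟨t, ht, hmr⟩ := ih'
          exact ⟨t, by simp; omega, hmr⟩

lemma soundness {w : List Sym} {k : ℕ} (h : A.AcceptsN w k) : D1 w 1 ∨ D2 w 1 := by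
  obtain ⟨qf, hqf, hsteps⟩ := h
  exact soundness_aux hsteps hqf rfl rfl

/-! ### The witness word family -/

/-- `wrd J i k` = `(b a^J)^i b a^k`. -/
def wrd (J : ℕ) : ℕ → ℕ → List Sym
  | 0, k => Sym.b :: rep k
  | i+1, k => Sym.b :: (rep J ++ wrd J i k)

/-- `pre J i` = `(b a^J)^i b`. -/
def pre (J : ℕ) : ℕ → List Sym
  | 0 => [Sym.b]
  | i+1 => Sym.b :: (rep J ++ pre J i)

lemma wrd_eq_pre (J i k : ℕ) : wrd J i k = pre J i ++ rep k := by
  induction i with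
  | zero => simp [wrd, pre]
  | succ i ih => simp [wrd, pre, ih]

@[simp] lemma cb_wrd (J i k : ℕ) : cb (wrd J i k) = i + 1 := by
  induction i with
  | zero => simp [wrd]
  | succ i ih => simp [wrd, ih]

lemma runw (J k : ℕ) : ∀ (i : ℕ) (m : G), ∃ n,
    A.Steps (St.S, wrd J i k, m) (St.B, [], m * ι ((i:ℤ) + 1 - (k:ℤ))) n := by
  intro i
  induction i with
  | zero =>
      intro m
      have r := run_B k (m * ι 1)
      have e : m * ι 1 * ι (-(k:ℤ)) = m * ι (((0:ℕ):ℤ) + 1 - (k:ℤ)) := by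
        rw [mul_assoc, ι_mul]
        all_goals exact congrArg (fun z => m * ι z) (by push_cast; ring)
      rw [e] at r
      exact ⟨k + 1, stepN (s := St.B) (q := St.S) (x := Sym.b) one_ne_zero (by simp [dlt]) r⟩
  | succ i ih =>
      intro m
      obtain ⟨n, hn⟩ := ih (m * ι 1)
      have s0 := run_S_skip J (wrd J i k) (m * ι 1)
      have t := steps_trans s0 hn
      have e : m * ι 1 * ι ((i:ℤ) + 1 - (k:ℤ)) = m * ι (((i+1:ℕ):ℤ) + 1 - (k:ℤ)) := by
        rw [mul_assoc, ι_mul]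
        all_goals exact congrArg (fun z => m * ι z) (by push_cast; ring)
      rw [e] at t
      exact ⟨0 + n + 1, stepN (s := St.S) (q := St.S) (x := Sym.b) one_ne_zero (by simp [dlt]) t⟩

lemma mem_wrd (J i : ℕ) : ∃ n, A.AcceptsN (wrd J i (i + 1)) n := by
  obtain ⟨n, hn⟩ := runw J (i + 1) i 1
  have e : (1 : G) * ι ((i:ℤ) + 1 - ((i+1:ℕ):ℤ)) = 1 := by
    rw [one_mul, ι_eq_one]; push_cast; ring
  rw [e] at hn
  exact ⟨n, St.B, memF_B, hn⟩

/-! ### Structure of the witness words -/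

lemma sym_dichotomy (s : Sym) : s = Sym.a ∨ s = Sym.b := by cases s <;> simp

lemma wrd_head (J i k : ℕ) : ∃ T, wrd J i k = Sym.b :: T := by
  cases i <;> exact ⟨_, rfl⟩

lemma ws1 (J k : ℕ) : ∀ (u : List Sym) (mn i g : ℕ),
    u ++ Sym.b :: rep g = rep mn ++ wrd J i k → g = k := by
  intro u
  induction u with
  | nil =>
      intro mn i g heq
      cases mn with
      | succ mn =>
          rw [rep_succ, List.cons_append] at heq
          simp at heq
      | zero =>
          simp only [rep_zero, List.nil_append] at heq
          cases i with
          | zero =>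
              rw [wrd] at heq
              simp only [List.nil_append, List.cons.injEq, true_and] at heq
              have := congrArg List.length heq
              simpa using this
          | succ i =>
              rw [wrd] at heq
              simp only [List.nil_append, List.cons.injEq, true_and] at heq
              have := congrArg cb heq
              simp at this
  | cons c u' ih =>
      intro mn i g heq
      rw [List.cons_append] at heq
      cases mn with
      | succ mn =>
          rw [rep_succ, List.cons_append] at heq
          simp only [List.cons.injEq] at heq
          exact ih mn i g heq.2
      | zero =>
          simp only [rep_zero, List.nil_append] at heq
          cases i with
          | zero =>
              rw [wrd] at heq
              simp only [List.cons.injEq] at heq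
              have := congrArg cb heq.2
              simp at this
          | succ i =>
              rw [wrd] at heq
              simp only [List.cons.injEq] at heq
              exact ih J i g heq.2

lemma strip_rep : ∀ (g mn : ℕ) (v w' : List Sym),
    rep g ++ Sym.b :: v = rep mn ++ Sym.b :: w' → g = mn := by
  intro g
  induction g with
  | zero =>
      intro mn v w' heq
      cases mn with
      | zero => rfl
      | succ mn =>
          rw [rep_succ, List.cons_append] at heq
          simp at heq
  | succ g ih =>
      intro mn v w' heq
      rw [rep_succ, List.cons_append] at heq
      cases mn with
      | zero =>
          simp at heq
      | succ mn =>
          rw [rep_succ, List.cons_append] at heq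
          simp only [List.cons.injEq, true_and] at heq
          exact congrArg Nat.succ (ih mn v w' heq)

lemma ws2 (J k : ℕ) : ∀ (u : List Sym) (mn i g : ℕ) (v : List Sym),
    u ++ Sym.b :: (rep g ++ Sym.b :: v) = rep mn ++ wrd J i k → g = J := by
  intro u
  induction u with
  | nil =>
      intro mn i g v heq
      cases mn with
      | succ mn =>
          rw [rep_succ, List.cons_append] at heq
          simp at heq
      | zero =>
          simp only [rep_zero, List.nil_append] at heq
          cases i with
          | zero =>
              rw [wrd] at heq
              simp only [List.cons.injEq, true_and] at heq
              have := congrArg cb heq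
              simp at this
          | succ i =>
              rw [wrd] at heq
              simp only [List.cons.injEq, true_and] at heq
              obtain ⟨T, hT⟩ := wrd_head J i k
              rw [hT] at heq
              exact strip_rep g J v T heq
  | cons c u' ih =>
      intro mn i g v heq
      rw [List.cons_append] at heq
      cases mn with
      | succ mn =>
          rw [rep_succ, List.cons_append] at heq
          simp only [List.cons.injEq] at heq
          exact ih mn i g v heq.2
      | zero =>
          simp only [rep_zero, List.nil_append] at heq
          cases i with
          | zero =>
              rw [wrd] at heq
              simp only [List.cons.injEq] at heq
              have := congrArg cb heq.2
              simp at this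
          | succ i =>
              rw [wrd] at heq
              simp only [List.cons.injEq] at heq
              exact ih J i g v heq.2

lemma one_eq_iota {X : ℤ} (h : (1 : G) = ι X) : X = 0 := by
  have := ι_eq_one.mp h.symm
  exact this

lemma notmem_wrd (J i k : ℕ) (hik : i + 1 < k) (hJ : i < J) :
    ¬ ∃ n, A.AcceptsN (wrd J i k) n := by
  rintro ⟨n, hacc⟩
  rcases soundness hacc with h1 | h2
  · obtain ⟨u, g, t, heq, ht, hone⟩ := h1
    have hgt : (g:ℤ) - (t:ℤ) = 0 := one_eq_iota hone
    have hgk : g = k := ws1 J k u 0 i g (by simpa using heq.symm)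
    have hcb := congrArg cb heq
    simp at hcb
    omega
  · obtain ⟨u, g, v, t, heq, ht, hone⟩ := h2
    have hgt : (g:ℤ) - (t:ℤ) = 0 := one_eq_iota hone
    have hgJ : g = J := ws2 J k u 0 i g v (by simpa using heq.symm)
    have hcb := congrArg cb heq
    simp at hcb
    omega


/-! ### Gap counting -/

lemma first_b : ∀ (w : List Sym), 1 ≤ cb w → ∃ n v, w = rep n ++ Sym.b :: v := by
  intro w
  induction w with
  | nil => intro h; simp at h
  | cons c w' ih =>
      intro h
      cases c with
      | a =>
          obtain ⟨n, v, hv⟩ := ih (by simpa using h)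
          exact ⟨n + 1, v, by rw [rep_succ, List.cons_append, hv]⟩
      | b => exact ⟨0, w', by simp⟩

lemma gap_bound : ∀ (N : ℕ) (w : List Sym), w.length ≤ N → ∀ mg : ℕ,
    (∀ u g v, w = u ++ Sym.b :: (rep g ++ Sym.b :: v) → mg ≤ g) →
    (cb w - 1) * (mg + 1) ≤ w.length := by
  intro N
  induction N with
  | zero =>
      intro w hlen mg _
      have : w = [] := List.eq_nil_of_length_eq_zero (by omega)
      subst this; simp
  | succ N ihN =>
      intro w hlen mg hgap
      by_cases hq : cb w ≤ 1
      · have : cb w - 1 = 0 := by omega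
        rw [this]; simp
      · push_neg at hq
        obtain ⟨n, v₁, hv₁⟩ := first_b w (by omega)
        have hcb1 : cb v₁ + 1 = cb w := by rw [hv₁]; simp <;> omega
        obtain ⟨n₂, v₂, hv₂⟩ := first_b v₁ (by omega)
        have hw2 : w = rep n ++ Sym.b :: (rep n₂ ++ Sym.b :: v₂) := by rw [hv₁, hv₂]
        have hmg : mg ≤ n₂ := hgap (rep n) n₂ v₂ hw2
        have hlenw : w.length = n + 1 + (n₂ + 1 + v₂.length) := by
          rw [hw2]; simp <;> omega
        have hlen' : (Sym.b :: v₂).length ≤ N := by simp; omega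
        have hgap' : ∀ u g v, Sym.b :: v₂ = u ++ Sym.b :: (rep g ++ Sym.b :: v) → mg ≤ g := by
          intro u g v h'
          refine hgap (rep n ++ Sym.b :: (rep n₂ ++ u)) g v ?_
          rw [hw2, h']
          simp [List.append_assoc]
        have ih' := ihN (Sym.b :: v₂) hlen' mg hgap'
        have hcb2 : cb (Sym.b :: v₂) = cb w - 1 := by
          rw [hw2]; simp <;> omega
        rw [hcb2] at ih'
        set X := cb w - 1 - 1 with hX
        have h2 : cb w - 1 = X + 1 := by omega
        rw [h2, add_mul, one_mul]
        have hstep : X * (mg + 1) + (mg + 1) ≤ (1 + v₂.length) + (n₂ + 1) := by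
          refine Nat.add_le_add ?_ (by omega)
          refine le_trans ih' ?_
          simp <;> omega
        refine le_trans hstep (by omega)

/-! ### Cost bound -/

lemma cheap_run (w : List Sym) (h : ∃ n, A.AcceptsN w n) :
    ∃ n, A.AcceptsN w n ∧ n ≤ 2 * Nat.sqrt w.length + 2 := by
  obtain ⟨n0, hn0⟩ := h
  have hD := soundness hn0
  by_cases hgap : ∃ g, (∃ u v, w = u ++ Sym.b :: (rep g ++ Sym.b :: v)) ∧ g + 1 ≤ cb w
  · set GS := {g | (∃ u v, w = u ++ Sym.b :: (rep g ++ Sym.b :: v)) ∧ g + 1 ≤ cb w} with hGS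
    have hne : GS.Nonempty := hgap
    obtain ⟨⟨u, v, heq⟩, hlt⟩ := Nat.sInf_mem hne
    set g0 := sInf GS with hg0
    have hcbw : cb w = cb u + cb v + 2 := by rw [heq]; simp <;> omega
    obtain ⟨n, hacc, hle⟩ := cheap2 u g0 v (by omega)
    have hallgaps : ∀ u' g' v', w = u' ++ Sym.b :: (rep g' ++ Sym.b :: v') → g0 ≤ g' := by
      intro u' g' v' h'
      by_cases hc : g' + 1 ≤ cb w
      · exact Nat.sInf_le ⟨⟨u', v', h'⟩, hc⟩
      · omega
    have hb := gap_bound w.length w le_rfl g0 hallgaps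
    have hsq : g0 * g0 ≤ w.length := by
      refine le_trans ?_ hb
      have h1 : g0 ≤ cb w - 1 := by omega
      exact Nat.mul_le_mul h1 (by omega)
    have hg0s : g0 ≤ Nat.sqrt w.length := Nat.le_sqrt.mpr hsq
    exact ⟨n, by rw [← heq] at hacc; exact hacc, by omega⟩
  · push_neg at hgap
    rcases hD with h1 | h2
    swap
    · obtain ⟨u, g, v, t, heq, ht, hone⟩ := h2
      have hgt : (g:ℤ) - (t:ℤ) = 0 := one_eq_iota hone
      have hcbw : cb w = cb u + cb v + 2 := by rw [heq]; simp <;> omega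
      have := hgap g ⟨u, v, heq⟩
      omega
    · obtain ⟨u, g, t, heq, ht, hone⟩ := h1
      have hgt : (g:ℤ) - (t:ℤ) = 0 := one_eq_iota hone
      have hcbw : cb w = cb u + 1 := by rw [heq]; simp
      obtain ⟨n, hacc, hle⟩ := cheap1 u g (by omega)
      have hallgaps : ∀ u' g' v', w = u' ++ Sym.b :: (rep g' ++ Sym.b :: v') → cb w ≤ g' := by
        intro u' g' v' h'
        have := hgap g' ⟨u', v', h'⟩
        omega
      have hb := gap_bound w.length w le_rfl (cb w) hallgaps
      have hsq : (g - 1) * (g - 1) ≤ w.length := by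
        refine le_trans ?_ hb
        exact Nat.mul_le_mul (by omega) (by omega)
      have hgs : g - 1 ≤ Nat.sqrt w.length := Nat.le_sqrt.mpr hsq
      exact ⟨n, by rw [← heq] at hacc; exact hacc, by omega⟩

lemma gmcW_le (w : List Sym) : A.gmcW w ≤ 2 * Nat.sqrt w.length + 2 := by
  unfold EFA.gmcW
  by_cases h : ∃ n, A.AcceptsN w n
  · obtain ⟨n, hacc, hb⟩ := cheap_run w h
    exact le_trans (Nat.sInf_le hacc) hb
  · have hempty : {k | A.AcceptsN w k} = ∅ := by
      ext k
      simp only [Set.mem_setOf_eq, Set.mem_empty_iff_false, iff_false]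
      exact fun hk => h ⟨k, hk⟩
    rw [hempty, Nat.sInf_empty]
    exact Nat.zero_le _

lemma gmcFun_le (n : ℕ) : A.gmcFun n ≤ 2 * Nat.sqrt n + 2 := by
  unfold EFA.gmcFun
  refine csSup_le ⟨A.gmcW (rep n), rep n, by simp, rfl⟩ ?_
  rintro m ⟨w, hlen, rfl⟩
  have := gmcW_le w
  rwa [hlen] at this


/-! ### Non-regularity -/

lemma notreg : ¬ A.language.IsRegular := by
  rintro ⟨σ, fσ, dfa, hacc⟩
  obtain ⟨x, y, hxy, heq⟩ := Fintype.exists_ne_map_eq_of_card_lt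
    (fun n : Fin (Fintype.card σ + 1) => dfa.evalFrom dfa.start (pre ((n : ℕ) + 1) (n : ℕ)))
    (by simp)
  obtain ⟨i, j, hij, he⟩ : ∃ i j : Fin (Fintype.card σ + 1), (i : ℕ) < (j : ℕ) ∧
      dfa.evalFrom dfa.start (pre ((i : ℕ) + 1) (i : ℕ)) =
        dfa.evalFrom dfa.start (pre ((j : ℕ) + 1) (j : ℕ)) := by
    rcases lt_or_gt_of_ne hxy with h | h
    · exact ⟨x, y, h, heq⟩
    · exact ⟨y, x, h, heq.symm⟩
  set iv := (i : ℕ)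
  set jv := (j : ℕ)
  have w1 : wrd (iv + 1) iv (jv + 1) ∉ A.language :=
    notmem_wrd _ _ _ (by omega) (by omega)
  have w2 : wrd (jv + 1) jv (jv + 1) ∈ A.language := mem_wrd _ _
  have hd : (wrd (iv + 1) iv (jv + 1) ∈ dfa.accepts) ↔
      (wrd (jv + 1) jv (jv + 1) ∈ dfa.accepts) := by
    rw [wrd_eq_pre, wrd_eq_pre, DFA.mem_accepts, DFA.mem_accepts]
    have e1 : dfa.eval (pre (iv + 1) iv ++ rep (jv + 1)) =
        dfa.evalFrom (dfa.evalFrom dfa.start (pre (iv + 1) iv)) (rep (jv + 1)) :=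
      dfa.evalFrom_of_append _ _ _
    have e2 : dfa.eval (pre (jv + 1) jv ++ rep (jv + 1)) =
        dfa.evalFrom (dfa.evalFrom dfa.start (pre (jv + 1) jv)) (rep (jv + 1)) :=
      dfa.evalFrom_of_append _ _ _
    rw [e1, e2, he]
  rw [hacc] at hd
  exact w1 (hd.mpr w2)

end EfaSqrt

/-- There is an EFA over `ℤ × ℤ₂` accepting a non-regular language with group memory
complexity in `O(√n)`. -/
theorem efa_int_zmod2_sqrt :
    ∃ (V : Type) (_ : Fintype V)
      (A : EFA V (Multiplicative ℤ × Multiplicative (ZMod 2))),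
      ¬ A.language.IsRegular ∧ InO A.gmcFun Nat.sqrt :=
  ⟨EfaSqrt.Sym, inferInstance, EfaSqrt.A, EfaSqrt.notreg, 2, fun n => EfaSqrt.gmcFun_le n⟩
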